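/- If a = τ(b) in α, then the nanoword ABAB with |A| = a, |B| = b is homotopic to the empty nanoword. -/

import Mathlib

/-! Nanophrases over a set `α` (with involution `τ`) in the sense of Turaev,
with letters drawn from a type `L`.  A phrase is encoded as a single list with
`none` acting as the separator `|` between components; thus the homotopy moves
may modify subwords spanning several components. -/

/-- A nanophrase over `α` with letters in `L`: a projection `L → α` and a word
with separators (`none`) dividing the components. -/
structure NPhrase (α : Type*) (L : Type*) where
  proj : L → α
  word : List (Option L)

namespace NPhrase

/-- The components of a separator-encoded phrase word. -/
def comps {L : Type*} : List (Option L) → List (List L)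
  | [] => [[]]
  | none :: l => [] :: comps l
  | some a :: l =>
      match comps l with
      | [] => [[a]]
      | c :: cs => (a :: c) :: cs

/-- Re-encode a list of components as a separator-encoded phrase word. -/
def ofComps {L : Type*} (cs : List (List L)) : List (Option L) :=
  List.intercalate [none] (cs.map (fun c => c.map some))

/-- The letters of a phrase word (separators removed). -/
def letters {L : Type*} (w : List (Option L)) : List L := w.filterMap id

/-- The Gauss condition: every letter occurs exactly twice or not at all. -/
def IsGauss {α L : Type*} [DecidableEq L] (P : NPhrase α L) : Prop :=
  ∀ x : L, (letters P.word).count x = 0 ∨ (letters P.word).count x = 2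

/-- A list consisting only of separators. -/
def Seps {L : Type*} (s : List (Option L)) : Prop := ∀ x ∈ s, x = none

/-- Isomorphism of nanophrases: a bijective relabelling of the letters which
preserves the projections on the letters actually occurring. -/
def Isomorphic {α L : Type*} (P Q : NPhrase α L) : Prop :=
  ∃ e : L ≃ L, (∀ x ∈ letters P.word, Q.proj (e x) = P.proj x) ∧
    Q.word = P.word.map (Option.map e)

/-- One elementary step of homotopy of nanophrases: an isomorphism or one of the
three homotopy moves (the modified subwords may span several components, i.e.
separators may occur between the displayed consecutive letters). -/
inductive Step {α L : Type*} (τ : α → α) : NPhrase α L → NPhrase α L → Prop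
  | iso (g g' : L → α) (w : List (Option L)) (e : L ≃ L)
      (hg : ∀ x ∈ letters w, g' (e x) = g x) :
      Step τ ⟨g, w⟩ ⟨g', w.map (Option.map e)⟩
  | move1 (g : L → α) (A : L) (x s y : List (Option L)) (hs : Seps s) :
      Step τ ⟨g, x ++ [some A] ++ s ++ [some A] ++ y⟩ ⟨g, x ++ s ++ y⟩
  | move2 (g : L → α) (A B : L) (x s₁ y s₂ z : List (Option L))
      (hs₁ : Seps s₁) (hs₂ : Seps s₂) (hAB : g B = τ (g A)) :
      Step τ ⟨g, x ++ [some A] ++ s₁ ++ [some B] ++ y ++ [some B] ++ s₂ ++ [some A] ++ z⟩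
             ⟨g, x ++ s₁ ++ y ++ s₂ ++ z⟩
  | move3 (g : L → α) (A B C : L) (x s₁ y s₂ z s₃ t : List (Option L))
      (hs₁ : Seps s₁) (hs₂ : Seps s₂) (hs₃ : Seps s₃)
      (hAB : g A = g B) (hBC : g B = g C) :
      Step τ ⟨g, x ++ [some A] ++ s₁ ++ [some B] ++ y ++ [some A] ++ s₂ ++ [some C] ++ z
                  ++ [some B] ++ s₃ ++ [some C] ++ t⟩
             ⟨g, x ++ [some B] ++ s₁ ++ [some A] ++ y ++ [some C] ++ s₂ ++ [some A] ++ z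
                  ++ [some C] ++ s₃ ++ [some B] ++ t⟩

/-- Homotopy of nanophrases (with the diagonal homotopy data): the equivalence
relation generated by isomorphisms and the three homotopy moves. -/
def Homotopic {α L : Type*} (τ : α → α) : NPhrase α L → NPhrase α L → Prop :=
  Relation.EqvGen (Step τ)

/-- Relations for the group `Π = ⟨ z_a (a ∈ α) ∣ z_a z_{τ(a)} = 1 ⟩`. -/
def gRels {α : Type*} (τ : α → α) : Set (FreeGroup α) :=
  {r | ∃ a : α, r = FreeGroup.of a * FreeGroup.of (τ a)}

/-- Relations for the abelian group `π = ⟨ a ∈ α ∣ a·τ(a) = 1, ab = ba ⟩`. -/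
def piRels {α : Type*} (τ : α → α) : Set (FreeGroup α) :=
  {r | (∃ a : α, r = FreeGroup.of a * FreeGroup.of (τ a)) ∨
    ∃ a b : α, r = FreeGroup.of a * FreeGroup.of b * (FreeGroup.of a)⁻¹ * (FreeGroup.of b)⁻¹}

/-- The value of `γ` on one component (a word), given the list `pre` of letters
of the phrase read before it: the ordered product of `z_{|X|}` at a first
occurrence and `z_{τ(|X|)}` at a second occurrence. -/
def gammaWord {α L : Type*} [DecidableEq L] (τ : α → α) (g : L → α) :
    List L → List L → PresentedGroup (gRels τ)
  | _, [] => 1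
  | pre, n :: l =>
      (if n ∈ pre then PresentedGroup.of (τ (g n)) else PresentedGroup.of (g n)) *
        gammaWord τ g (pre ++ [n]) l

/-- The `i`-th coordinate (0-indexed) of the invariant `γ` of a nanophrase. -/
def gammaCoord {α L : Type*} [DecidableEq L] (τ : α → α) (P : NPhrase α L) (i : ℕ) :
    PresentedGroup (gRels τ) :=
  gammaWord τ P.proj (((comps P.word).take i).flatten) ((comps P.word).getD i [])

/-- The pairing `(w_i, w_j)_P ∈ π`: the product of `|X|` over the letters `X`
occurring both in the `i`-th and in the `j`-th component (0-indexed). -/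
def pairing {α L : Type*} [DecidableEq L] (τ : α → α) (P : NPhrase α L) (i j : ℕ) :
    PresentedGroup (piRels τ) :=
  ((((comps P.word).getD i []).filter (fun x => x ∈ (comps P.word).getD j [])).map
    (fun x => PresentedGroup.of (P.proj x))).prod

/-- Merge the `l`-th and `(l+1)`-st components of a list of components. -/
def mergeAt {L : Type*} (l : ℕ) (cs : List (List L)) : List (List L) :=
  cs.take l ++ [cs.getD l [] ++ cs.getD (l + 1) []] ++ cs.drop (l + 2)

/-- The nanophrase `P_a^{1,1;p,q}` of length `k` (0-indexed components): the
letter `0` with `|0| = a` in components `p` and `q`, all other components empty. -/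
def stdPair {α : Type*} (k p q : ℕ) (a : α) : NPhrase α ℕ :=
  ⟨fun _ => a, ofComps ((List.range k).map fun i => if i = p ∨ i = q then [0] else [])⟩

/-- The nanoword `w_{a,b} = ABAB` with `|A| = a`, `|B| = b`, viewed as a
nanophrase of length 1. -/
def wab {α : Type*} (a b : α) : NPhrase α ℕ :=
  ⟨fun n => if n = 0 then a else b, [some 0, some 1, some 0, some 1]⟩

/-- The desingularization of an étale word `w`: each letter `A` of multiplicity
`m` is replaced, at its `i`-th occurrence (1-indexed), by
`A_{1,i} A_{2,i} ⋯ A_{i-1,i} A_{i,i+1} ⋯ A_{i,m}`, where `A_{i,j}` is encoded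
as `(A, i, j)`; letters of multiplicity 1 disappear. -/
def desing {L : Type*} [DecidableEq L] (w : List L) : List (L × ℕ × ℕ) :=
  ((List.range w.length).zip w).flatMap fun pA =>
    let A := pA.2
    let i := (w.take (pA.1 + 1)).count A
    let m := w.count A
    ((List.range (i - 1)).map fun t => (A, t + 1, i)) ++
      ((List.range (m - i)).map fun t => (A, i, i + 1 + t))

/-- Two étale words over `α` are homotopic if their desingularizations are
homotopic nanowords (nanophrases of length 1). -/
def EtaleHomotopic {α L : Type*} [DecidableEq L] (τ : α → α)
    (g₁ : L → α) (w₁ : List L) (g₂ : L → α) (w₂ : List L) : Prop :=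
  Homotopic τ (⟨fun t => g₁ t.1, (desing w₁).map some⟩ : NPhrase α (L × ℕ × ℕ))
    ⟨fun t => g₂ t.1, (desing w₂).map some⟩

end NPhrase

open NPhrase in
/-- if `a = τ(b)`, the nanoword `ABAB` with `|A| = a`, `|B| = b`
is homotopic to the empty nanoword. -/
theorem ABAB_contractible {α : Type*} [Fintype α] (τ : α → α)
    (hτ : Function.Involutive τ) (a b : α) (hab : a = τ b)
    (g : ℕ → α) (hg0 : g 0 = a) (hg1 : g 1 = b) :
    Homotopic τ (⟨g, [some 0, some 1, some 0, some 1]⟩ : NPhrase α ℕ)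
      ⟨g, ([] : List (Option ℕ))⟩ := by
  classical
  set g' : ℕ → α := fun n => if n % 2 = 0 then a else b with hg'
  have hba : b = τ a := by rw [hab, hτ]
  have hg'0 : g' 0 = a := rfl
  have hg'1 : g' 1 = b := rfl
  have hg'2 : g' 2 = a := rfl
  have hg'3 : g' 3 = b := rfl
  have hg'4 : g' 4 = a := rfl
  have hg'5 : g' 5 = b := rfl
  -- iso step to change the projection function
  have siso1 : Step τ (⟨g, [some 0, some 1, some 0, some 1]⟩ : NPhrase α ℕ)
      ⟨g', [some 0, some 1, some 0, some 1]⟩ := by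
    have h := Step.iso (τ := τ) (L := ℕ) g g' [some 0, some 1, some 0, some 1]
      (Equiv.refl ℕ) (by
        intro x hx
        simp only [letters, List.filterMap] at hx
        fin_cases hx <;> simp [hg'0, hg'1, hg0, hg1])
    simpa using h
  have s1 : Step τ (⟨g', [some 2, some 3, some 0, some 1, some 3, some 2, some 0, some 1]⟩ :
      NPhrase α ℕ) ⟨g', [some 0, some 1, some 0, some 1]⟩ := by
    have h := Step.move2 (τ := τ) g' 2 3 [] [] [some 0, some 1] [] [some 0, some 1]
      (by intro x hx; simp at hx) (by intro x hx; simp at hx)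
      (by rw [hg'2, hg'3, hba])
    simpa using h
  have s2 : Step τ
      (⟨g', [some 2, some 4, some 5, some 3, some 0, some 1, some 3, some 2, some 0, some 1,
        some 5, some 4]⟩ : NPhrase α ℕ)
      ⟨g', [some 2, some 3, some 0, some 1, some 3, some 2, some 0, some 1]⟩ := by
    have h := Step.move2 (τ := τ) g' 4 5 [some 2] []
      [some 3, some 0, some 1, some 3, some 2, some 0, some 1] [] []
      (by intro x hx; simp at hx) (by intro x hx; simp at hx)
      (by rw [hg'4, hg'5, hba])
    simpa using h
  have s3 : Step τ
      (⟨g', [some 2, some 4, some 3, some 5, some 0, some 3, some 1, some 2, some 0, some 5,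
        some 1, some 4]⟩ : NPhrase α ℕ)
      (⟨g', [some 2, some 4, some 5, some 3, some 0, some 1, some 3, some 2, some 0, some 1,
        some 5, some 4]⟩ : NPhrase α ℕ) := by
    have h := Step.move3 (τ := τ) g' 3 5 1 [some 2, some 4] [] [some 0] [] [some 2, some 0]
      [] [some 4]
      (by intro x hx; simp at hx) (by intro x hx; simp at hx) (by intro x hx; simp at hx)
      rfl rfl
    simpa using h
  have s4 : Step τ
      (⟨g', [some 2, some 4, some 3, some 5, some 0, some 3, some 1, some 2, some 0, some 5,
        some 1, some 4]⟩ : NPhrase α ℕ)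
      ⟨g', [some 2, some 4, some 3, some 3, some 1, some 2, some 1, some 4]⟩ := by
    have h := Step.move2 (τ := τ) g' 5 0 [some 2, some 4, some 3] []
      [some 3, some 1, some 2] [] [some 1, some 4]
      (by intro x hx; simp at hx) (by intro x hx; simp at hx)
      (by rw [hg'5, hg'0, hab])
    simpa using h
  have s5 : Step τ
      (⟨g', [some 2, some 4, some 3, some 3, some 1, some 2, some 1, some 4]⟩ : NPhrase α ℕ)
      ⟨g', [some 2, some 4, some 1, some 2, some 1, some 4]⟩ := by
    have h := Step.move1 (τ := τ) g' 3 [some 2, some 4] [] [some 1, some 2, some 1, some 4]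
      (by intro x hx; simp at hx)
    simpa using h
  have s6 : Step τ
      (⟨g', [some 2, some 4, some 1, some 2, some 1, some 4]⟩ : NPhrase α ℕ)
      ⟨g', [some 2, some 2]⟩ := by
    have h := Step.move2 (τ := τ) g' 4 1 [some 2] [] [some 2] [] []
      (by intro x hx; simp at hx) (by intro x hx; simp at hx)
      (by rw [hg'4, hg'1, hba])
    simpa using h
  have s7 : Step τ (⟨g', [some 2, some 2]⟩ : NPhrase α ℕ) ⟨g', []⟩ := by
    have h := Step.move1 (τ := τ) g' 2 [] [] [] (by intro x hx; simp at hx)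
    simpa using h
  have siso2 : Step τ (⟨g', ([] : List (Option ℕ))⟩ : NPhrase α ℕ) ⟨g, []⟩ := by
    have h := Step.iso (τ := τ) (L := ℕ) g' g ([] : List (Option ℕ)) (Equiv.refl ℕ)
      (by intro x hx; simp [letters] at hx)
    simpa using h
  exact Relation.EqvGen.trans _ _ _ (Relation.EqvGen.rel _ _ siso1)
    (Relation.EqvGen.trans _ _ _ (Relation.EqvGen.symm _ _ (Relation.EqvGen.rel _ _ s1))
    (Relation.EqvGen.trans _ _ _ (Relation.EqvGen.symm _ _ (Relation.EqvGen.rel _ _ s2))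
    (Relation.EqvGen.trans _ _ _ (Relation.EqvGen.symm _ _ (Relation.EqvGen.rel _ _ s3))
    (Relation.EqvGen.trans _ _ _ (Relation.EqvGen.rel _ _ s4)
    (Relation.EqvGen.trans _ _ _ (Relation.EqvGen.rel _ _ s5)
    (Relation.EqvGen.trans _ _ _ (Relation.EqvGen.rel _ _ s6)
    (Relation.EqvGen.trans _ _ _ (Relation.EqvGen.rel _ _ s7)
      (Relation.EqvGen.rel _ _ siso2))))))))
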